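/- Let I ⊆ K[[x_1,...,x_k, y_1,...,y_{n−k}]] be an ideal with ord(I) ≥ μ at every point of the subspace S = {x = 0} lying in supp(I,μ), and consider the blow-up chart substitution x_i ↦ x'_i·y_m (for all i), y_j ↦ y'_j·y_m (j < m), y_m ↦ y_m, y_j ↦ y_j (j > m), with controlled transform f' = y_m^{−μ}·σ*(f). Writing f = Σ_α c_{α}(y)·x^α, one has f' = Σ_α c'_{α}(y')·(x')^α with c'_{α} = y_m^{−μ+|α|}·σ*(c_{α}); in particular, restriction to the strict transform S' = {x' = 0} commutes with the controlled transform: (σ^c f)|_{S'} = (σ|_{S'})^c (f|_S). -/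

import Mathlib

/-- Writing `f ∈ K[[x_1,...,x_k,y_1,...,y_l]]` as `f = Σ_α c_α(y)·x^α`, the
coefficient `c_α` as a power series in `y`; `coefAt 0` is the restriction to
`S = {x = 0}` (resp. to the strict transform `S' = {x' = 0}`). -/
noncomputable def coefAt {K : Type*} [CommRing K] {k l : ℕ} (α : Fin k →₀ ℕ)
    (f : MvPowerSeries (Fin k ⊕ Fin l) K) : MvPowerSeries (Fin l) K :=
  fun β => f (α.mapDomain Sum.inl + β.mapDomain Sum.inr)

/-- The blow-up chart substitution `x_i ↦ x'_i·y_m` (all `i`), `y_j ↦ y'_j·y_m`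
(`j < m`), `y_m ↦ y_m`, `y_j ↦ y_j` (`j > m`), acting coefficientwise on formal power
series. -/
noncomputable def blowSubst {K : Type*} [CommRing K] {k l : ℕ} (m : Fin l)
    (f : MvPowerSeries (Fin k ⊕ Fin l) K) : MvPowerSeries (Fin k ⊕ Fin l) K :=
  fun e =>
    let t : ℕ := (∑ i : Fin k, e (Sum.inl i)) + ∑ j ∈ Finset.univ.filter (· < m), e (Sum.inr j)
    if t ≤ e (Sum.inr m) then f (e.update (Sum.inr m) (e (Sum.inr m) - t)) else 0

/-- The induced blow-up chart substitution on the `y`-variables only: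
`y_j ↦ y'_j·y_m` (`j < m`), `y_m ↦ y_m`, `y_j ↦ y_j` (`j > m`). -/
noncomputable def blowSubstY {K : Type*} [CommRing K] {l : ℕ} (m : Fin l)
    (g : MvPowerSeries (Fin l) K) : MvPowerSeries (Fin l) K :=
  fun β =>
    let t : ℕ := ∑ j ∈ Finset.univ.filter (· < m), β j
    if t ≤ β m then g (β.update m (β m - t)) else 0

lemma sum_le_split {l : ℕ} (m : Fin l) (g : Fin l → ℕ) :
    ∑ j ∈ Finset.univ.filter (· ≤ m), g j
      = (∑ j ∈ Finset.univ.filter (· < m), g j) + g m := by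
  have h : Finset.univ.filter (· ≤ m) = insert m (Finset.univ.filter (· < m)) := by
    ext j; simp [le_iff_lt_or_eq, or_comm]
  rw [h, Finset.sum_insert (by simp), add_comm]

lemma xpow_mul_coeff {K : Type*} [CommRing K] {l : ℕ} (n : ℕ) (m : Fin l)
    (g : MvPowerSeries (Fin l) K) (β : Fin l →₀ ℕ) :
    ((MvPowerSeries.X m : MvPowerSeries (Fin l) K) ^ n * g) β
      = if n ≤ β m then g (β - Finsupp.single m n) else 0 := by
  classical
  rw [show ((MvPowerSeries.X m : MvPowerSeries (Fin l) K) ^ n * g) β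
      = MvPowerSeries.coeff β ((MvPowerSeries.X m : MvPowerSeries (Fin l) K) ^ n * g) from rfl,
    MvPowerSeries.X_pow_eq, MvPowerSeries.coeff_monomial_mul]
  by_cases h : n ≤ β m
  · rw [if_pos (Finsupp.single_le_iff.mpr h), if_pos h, one_mul]; rfl
  · rw [if_neg (fun hc => h (Finsupp.single_le_iff.mp hc)), if_neg h]

/-- Compatibility of coefficients and restriction with the controlled transform: if
`f` has order `≥ μ` along the center `{x = 0, y_1 = ... = y_m = 0}`, then `σ*(f)` is
divisible by `y_m^μ`; writing `f = Σ_α c_α(y)x^α` and `f' = y_m^{−μ}σ*(f) = Σ_α c'_α(y')(x')^α`,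
one has `c'_α = y_m^{−μ+|α|}·σ*(c_α)`, and in particular restriction to the strict
transform `S' = {x' = 0}` commutes with the controlled transform:
`(σ^c f)|_{S'} = (σ|_{S'})^c(f|_S)`. -/
theorem stmt_19 {K : Type*} [Field K] [CharZero K] {k l : ℕ} (m : Fin l) (μ : ℕ)
    (f : MvPowerSeries (Fin k ⊕ Fin l) K)
    (hf : ∀ e : (Fin k ⊕ Fin l) →₀ ℕ, f e ≠ 0 →
      μ ≤ (∑ i : Fin k, e (Sum.inl i)) + ∑ j ∈ Finset.univ.filter (· ≤ m), e (Sum.inr j)) :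
    (∀ e : (Fin k ⊕ Fin l) →₀ ℕ, blowSubst m f e ≠ 0 → μ ≤ e (Sum.inr m)) ∧
    (∀ α : Fin k →₀ ℕ,
      (MvPowerSeries.X m : MvPowerSeries (Fin l) K) ^ μ *
          coefAt α (fun e => blowSubst m f (e + Finsupp.single (Sum.inr m) μ))
        = MvPowerSeries.X m ^ (α.sum fun _ v => v) * blowSubstY m (coefAt α f)) ∧
    (MvPowerSeries.X m : MvPowerSeries (Fin l) K) ^ μ *
        coefAt (0 : Fin k →₀ ℕ) (fun e => blowSubst m f (e + Finsupp.single (Sum.inr m) μ))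
      = blowSubstY m (coefAt (0 : Fin k →₀ ℕ) f) := by
  classical
  have hupd : ∀ (e : (Fin k ⊕ Fin l) →₀ ℕ) (v : ℕ) (a : Fin k ⊕ Fin l),
      (e.update (Sum.inr m) v) a = if a = Sum.inr m then v else e a := by
    intro e v a; simp [Finsupp.coe_update, Function.update_apply]
  -- Part 1
  have part1 : ∀ e : (Fin k ⊕ Fin l) →₀ ℕ, blowSubst m f e ≠ 0 → μ ≤ e (Sum.inr m) := by
    intro e he
    unfold blowSubst at he
    simp only at he
    set t := (∑ i : Fin k, e (Sum.inl i)) + ∑ j ∈ Finset.univ.filter (· < m), e (Sum.inr j)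
      with ht
    by_cases hc : t ≤ e (Sum.inr m)
    · rw [if_pos hc] at he
      have h2 := hf _ he
      rw [sum_le_split] at h2
      have h3 : ∀ i : Fin k, (e.update (Sum.inr m) (e (Sum.inr m) - t)) (Sum.inl i)
          = e (Sum.inl i) := by intro i; rw [hupd]; simp
      have h4 : ∀ j ∈ Finset.univ.filter (· < m),
          (e.update (Sum.inr m) (e (Sum.inr m) - t)) (Sum.inr j) = e (Sum.inr j) := by
        intro j hj; rw [hupd]
        simp only [Finset.mem_filter] at hj
        simp [Sum.inr.injEq, (hj.2).ne]
      have h5 : (e.update (Sum.inr m) (e (Sum.inr m) - t)) (Sum.inr m)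
          = e (Sum.inr m) - t := by rw [hupd]; simp
      rw [Finset.sum_congr rfl (fun i _ => h3 i), Finset.sum_congr rfl h4, h5] at h2
      omega
    · rw [if_neg hc] at he; exact absurd rfl he

  -- generic application lemmas
  have h01 : ∀ (γ : Fin l →₀ ℕ) (i : Fin k), γ.mapDomain Sum.inr (Sum.inl i) = 0 :=
    fun γ i => Finsupp.mapDomain_notin_range _ _ (by simp)
  have h02 : ∀ (δ : Fin k →₀ ℕ) (j : Fin l), δ.mapDomain Sum.inl (Sum.inr j) = 0 :=
    fun δ j => Finsupp.mapDomain_notin_range _ _ (by simp)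
  have part2 : ∀ α : Fin k →₀ ℕ,
      (MvPowerSeries.X m : MvPowerSeries (Fin l) K) ^ μ *
          coefAt α (fun e => blowSubst m f (e + Finsupp.single (Sum.inr m) μ))
        = MvPowerSeries.X m ^ (α.sum fun _ v => v) * blowSubstY m (coefAt α f) := by
    intro α
    apply MvPowerSeries.ext
    intro β
    rw [MvPowerSeries.coeff_apply, MvPowerSeries.coeff_apply, xpow_mul_coeff, xpow_mul_coeff]
    set A := α.sum fun _ v => v with hA
    have hAs : ∑ i : Fin k, α i = A := by
      rw [hA]; exact (Finsupp.sum_fintype α (fun _ v => v) (fun _ => rfl)).symm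
    set s := ∑ j ∈ Finset.univ.filter (· < m), β j with hs
    have hEl : ∀ (γ : Fin l →₀ ℕ) (i : Fin k),
        ((α.mapDomain Sum.inl + γ.mapDomain Sum.inr : (Fin k ⊕ Fin l) →₀ ℕ)) (Sum.inl i) = α i := by
      intro γ i
      rw [Finsupp.add_apply, Finsupp.mapDomain_apply Sum.inl_injective, h01, add_zero]
    have hEr : ∀ (γ : Fin l →₀ ℕ) (j : Fin l),
        ((α.mapDomain Sum.inl + γ.mapDomain Sum.inr : (Fin k ⊕ Fin l) →₀ ℕ)) (Sum.inr j) = γ j := by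
      intro γ j
      rw [Finsupp.add_apply, Finsupp.mapDomain_apply Sum.inr_injective, h02, zero_add]
    -- compute the RHS inner expression when A ≤ β m
    set β₂ := β - Finsupp.single m A with hβ₂
    have hβ₂m : β₂ m = β m - A := by
      rw [hβ₂, Finsupp.tsub_apply, Finsupp.single_apply]; simp
    have hβ₂j : ∀ j, j ≠ m → β₂ j = β j := by
      intro j hj
      rw [hβ₂, Finsupp.tsub_apply, Finsupp.single_apply, if_neg (fun h => hj h.symm)]
      simp
    have hsy : ∑ j ∈ Finset.univ.filter (· < m), β₂ j = s := by
      refine Finset.sum_congr rfl fun j hj => ?_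
      simp only [Finset.mem_filter] at hj
      exact hβ₂j j hj.2.ne
    have hbY : blowSubstY m (coefAt α f) β₂
        = if s ≤ β m - A then
            f (α.mapDomain Sum.inl + (β₂.update m (β m - A - s)).mapDomain Sum.inr)
          else 0 := by
      unfold blowSubstY
      simp only []
      rw [hsy, hβ₂m]
      rfl
    by_cases h1 : μ ≤ β m
    · rw [if_pos h1]
      set β₁ := β - Finsupp.single m μ with hβ₁
      have hβ₁m : β₁ m = β m - μ := by
        rw [hβ₁, Finsupp.tsub_apply, Finsupp.single_apply]; simp
      have hβ₁j : ∀ j, j ≠ m → β₁ j = β j := by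
        intro j hj
        rw [hβ₁, Finsupp.tsub_apply, Finsupp.single_apply, if_neg (fun h => hj h.symm)]
        simp
      set e₁ := α.mapDomain Sum.inl + β₁.mapDomain Sum.inr + Finsupp.single (Sum.inr m) μ
        with he₁
      have he₁l : ∀ i, e₁ (Sum.inl i) = α i := by
        intro i
        rw [he₁, Finsupp.add_apply, hEl, Finsupp.single_apply, if_neg (by simp), add_zero]
      have he₁j : ∀ j, j ≠ m → e₁ (Sum.inr j) = β j := by
        intro j hj
        rw [he₁, Finsupp.add_apply, hEr, Finsupp.single_apply,
          if_neg (by exact fun h => hj (Sum.inr.inj h).symm), add_zero, hβ₁j j hj]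
      have he₁m : e₁ (Sum.inr m) = β m := by
        rw [he₁, Finsupp.add_apply, hEr, Finsupp.single_apply, if_pos rfl, hβ₁m]
        omega
      have hT : (∑ i : Fin k, e₁ (Sum.inl i))
          + ∑ j ∈ Finset.univ.filter (· < m), e₁ (Sum.inr j) = A + s := by
        congr 1
        · rw [Finset.sum_congr rfl (fun i _ => he₁l i), hAs]
        · rw [hs]
          refine Finset.sum_congr rfl fun j hj => ?_
          simp only [Finset.mem_filter] at hj
          exact he₁j j hj.2.ne
      have hLHS : coefAt α (fun e => blowSubst m f (e + Finsupp.single (Sum.inr m) μ)) β₁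
          = if A + s ≤ β m then f (e₁.update (Sum.inr m) (β m - (A + s))) else 0 := by
        show blowSubst m f e₁ = _
        unfold blowSubst
        simp only []
        rw [hT, he₁m]
      rw [hLHS]
      by_cases h2 : A + s ≤ β m
      · rw [if_pos h2, if_pos (by omega : A ≤ β m), hbY, if_pos (by omega : s ≤ β m - A)]
        congr 1
        ext a
        rcases a with i | j
        · rw [hupd, if_neg (by simp), he₁l, hEl]
        · by_cases hj : j = m
          · subst hj
            rw [hupd, if_pos rfl, hEr, Finsupp.coe_update, Function.update_apply,
              if_pos rfl]
            omega
          · rw [hupd, if_neg (by simp [hj]), he₁j j hj, hEr, Finsupp.coe_update,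
              Function.update_apply, if_neg hj, hβ₂j j hj]
      · rw [if_neg h2]
        by_cases h3 : A ≤ β m
        · rw [if_pos h3, hbY, if_neg (by omega)]
        · rw [if_neg h3]
    · rw [if_neg h1]
      by_cases h3 : A ≤ β m
      · rw [if_pos h3, hbY]
        by_cases h4 : s ≤ β m - A
        · rw [if_pos h4]
          by_contra hne
          have hne' : f (α.mapDomain Sum.inl + (β₂.update m (β m - A - s)).mapDomain Sum.inr)
              ≠ 0 := fun h => hne h.symm
          have h5 := hf _ hne'
          rw [sum_le_split] at h5
          have h6 : ∑ i : Fin k,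
              ((α.mapDomain Sum.inl + (β₂.update m (β m - A - s)).mapDomain Sum.inr : (Fin k ⊕ Fin l) →₀ ℕ))
                (Sum.inl i) = A := by
            rw [Finset.sum_congr rfl (fun i _ => hEl _ i), hAs]
          have h7 : ∑ j ∈ Finset.univ.filter (· < m),
              ((α.mapDomain Sum.inl + (β₂.update m (β m - A - s)).mapDomain Sum.inr : (Fin k ⊕ Fin l) →₀ ℕ))
                (Sum.inr j) = s := by
            rw [hs]
            refine Finset.sum_congr rfl fun j hj => ?_
            simp only [Finset.mem_filter] at hj
            rw [hEr, Finsupp.coe_update, Function.update_apply, if_neg hj.2.ne,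
              hβ₂j j hj.2.ne]
          have h8 : ((α.mapDomain Sum.inl + (β₂.update m (β m - A - s)).mapDomain Sum.inr : (Fin k ⊕ Fin l) →₀ ℕ))
              (Sum.inr m) = β m - A - s := by
            rw [hEr, Finsupp.coe_update, Function.update_apply, if_pos rfl]
          rw [h6, h7, h8] at h5
          omega
        · rw [if_neg h4]
      · rw [if_neg h3]
  refine ⟨part1, part2, ?_⟩
  have h := part2 0
  rwa [Finsupp.sum_zero_index, pow_zero, one_mul] at h
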